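/- Let W ⊆ P(ℕ) be a class of subsets of ℕ that is downward closed under Turing reducibility. Suppose a problem P admits preservation of W but a problem Q does not admit preservation of W. Then there exists a Turing ideal S with S ⊆ W such that P holds in S but Q does not hold in S. -/

import Mathlib

open Classical in
/-- The characteristic function of a set of naturals. -/
noncomputable def chi (A : Set ℕ) : ℕ → ℕ := fun n => if n ∈ A then 1 else 0

/-- The effective join (Turing join) of two sets of naturals:
`X ⊕ Y = {2n : n ∈ X} ∪ {2n+1 : n ∈ Y}`. -/
def setJoin (A B : Set ℕ) : Set ℕ :=
  {n | (∃ m ∈ A, n = 2 * m) ∨ (∃ m ∈ B, n = 2 * m + 1)}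

/-- The graph of a function `f : ℕ → ℕ`, coded as a set of naturals. -/
def funGraph (f : ℕ → ℕ) : Set ℕ := {m | ∃ n, m = Nat.pair n (f n)}

/-- Partial recursiveness relative to an oracle `g : ℕ → ℕ` (oracle computability). -/
inductive RecursiveInFn (g : ℕ → ℕ) : (ℕ →. ℕ) → Prop
  | zero : RecursiveInFn g (pure 0)
  | succ : RecursiveInFn g Nat.succ
  | left : RecursiveInFn g fun n => (Nat.unpair n).1
  | right : RecursiveInFn g fun n => (Nat.unpair n).2
  | oracle : RecursiveInFn g g
  | pair {f h : ℕ →. ℕ} : RecursiveInFn g f → RecursiveInFn g h →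
      RecursiveInFn g fun n => Nat.pair <$> f n <*> h n
  | comp {f h : ℕ →. ℕ} : RecursiveInFn g f → RecursiveInFn g h →
      RecursiveInFn g fun n => h n >>= f
  | prec {f h : ℕ →. ℕ} : RecursiveInFn g f → RecursiveInFn g h →
      RecursiveInFn g (Nat.unpaired fun a n =>
        n.rec (f a) fun y IH => do {let i ← IH; h (Nat.pair a (Nat.pair y i))})
  | rfind {f : ℕ →. ℕ} : RecursiveInFn g f →
      RecursiveInFn g fun a => Nat.rfind fun n => (fun m => m = 0) <$> f (Nat.pair a n)

/-- Turing reducibility between sets of naturals. -/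
noncomputable def TuringRed (A B : Set ℕ) : Prop := RecursiveInFn (chi B) (chi A)

/-- `A` is `Σ⁰₁(Z)` (i.e. `Z`-c.e.): `A` is the domain of a partial `Z`-computable function. -/
noncomputable def SigmaOneIn (Z A : Set ℕ) : Prop :=
  ∃ f : ℕ →. ℕ, RecursiveInFn (chi Z) f ∧ A = f.Dom

/-- `g` dominates `f` if `g n ≥ f n` for every `n`. -/
def Dominates (g f : ℕ → ℕ) : Prop := ∀ n, f n ≤ g n

/-- `f` is `Z`-hyperimmune: no `Z`-computable function dominates `f`. -/
noncomputable def HyperimmuneIn (Z : Set ℕ) (f : ℕ → ℕ) : Prop :=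
  ∀ g : ℕ → ℕ, RecursiveInFn (chi Z) g → ¬ Dominates g f

/-- `A` is `Δ⁰₂(G)`: `A` is limit computable relative to `G`. -/
noncomputable def DeltaTwoIn (G A : Set ℕ) : Prop :=
  ∃ h : ℕ → ℕ, RecursiveInFn (chi G) h ∧ ∀ x, ∃ s₀, ∀ s ≥ s₀, h (Nat.pair x s) = chi A x

/-- `A` is c.e. (`Σ⁰₁`). -/
noncomputable def CESet (A : Set ℕ) : Prop := SigmaOneIn ∅ A

/-- `A` is `Δ⁰₂` (limit computable). -/
noncomputable def DeltaTwo (A : Set ℕ) : Prop := DeltaTwoIn ∅ A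

/-- `A` is `Z`-immune: `A` is infinite and contains no infinite `Z`-computable subset. -/
noncomputable def ImmuneIn (Z A : Set ℕ) : Prop :=
  A.Infinite ∧ ∀ B : Set ℕ, TuringRed B Z → B.Infinite → ¬ B ⊆ A

/-- `A` is `Z`-hyperimmune as a set: its principal function is `Z`-hyperimmune. -/
noncomputable def HyperimmuneSetIn (Z A : Set ℕ) : Prop :=
  A.Infinite ∧ HyperimmuneIn Z (Nat.nth (· ∈ A))

/-- Enumeration reducibility, with finite sets coded by binary representation
(`m ∈ D_u ↔ Nat.testBit u m`). -/
noncomputable def EnumRed (B A : Set ℕ) : Prop :=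
  ∃ W : Set ℕ, CESet W ∧
    ∀ n, n ∈ B ↔ ∃ u, Nat.pair n u ∈ W ∧ ∀ m, Nat.testBit u m = true → m ∈ A

/-- `B` is cototal: `B ≤ₑ ℕ \ B`. -/
noncomputable def Cototal (B : Set ℕ) : Prop := EnumRed B Bᶜ

/-- `X` is semi-computable: there is a computable selector function. -/
noncomputable def SemiComputable (X : Set ℕ) : Prop :=
  ∃ g : ℕ → ℕ, RecursiveInFn (chi ∅) g ∧
    ∀ x y : ℕ, (g (Nat.pair x y) = x ∨ g (Nat.pair x y) = y) ∧
      ((x ∈ X ∨ y ∈ X) → g (Nat.pair x y) ∈ X)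

/-- A problem: a set of instances, and a solution relation between instances and solutions.
Instances and solutions are coded by sets of naturals. -/
structure Problem where
  Inst : Set (Set ℕ)
  Sol : Set ℕ → Set ℕ → Prop

/-- `P` admits preservation of `W`. -/
noncomputable def Preserves (P : Problem) (W : Set (Set ℕ)) : Prop :=
  ∀ Z ∈ W, ∀ X ∈ P.Inst, TuringRed X Z → ∃ Y, P.Sol X Y ∧ setJoin Z Y ∈ W

/-- `P` admits strong preservation of `W`. -/
noncomputable def StronglyPreserves (P : Problem) (W : Set (Set ℕ)) : Prop :=
  ∀ Z ∈ W, ∀ X ∈ P.Inst, ∃ Y, P.Sol X Y ∧ setJoin Z Y ∈ W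

/-- `W` is downward closed under Turing reducibility. -/
noncomputable def DownwardClosed (W : Set (Set ℕ)) : Prop :=
  ∀ X ∈ W, ∀ Y : Set ℕ, TuringRed Y X → Y ∈ W

/-- A Turing ideal: closed under effective join and downward closed under `≤_T`. -/
noncomputable def TuringIdeal (S : Set (Set ℕ)) : Prop :=
  (∀ X ∈ S, ∀ Y ∈ S, setJoin X Y ∈ S) ∧ DownwardClosed S

/-- `P` holds in `S`: every instance of `P` in `S` has a solution in `S`. -/
def HoldsIn (P : Problem) (S : Set (Set ℕ)) : Prop :=
  ∀ X ∈ P.Inst, X ∈ S → ∃ Y, P.Sol X Y ∧ Y ∈ S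

/-- `P` admits avoidance of `k` cones (`k ≤ ω`, with `ω` represented by `⊤ : ℕ∞`). -/
noncomputable def AvoidsCones (P : Problem) (k : ℕ∞) : Prop :=
  ∀ Z : Set ℕ, ∀ B : ℕ → Set ℕ, (∀ s : ℕ, (s : ℕ∞) < k → ¬ TuringRed (B s) Z) →
    ∀ X ∈ P.Inst, TuringRed X Z →
      ∃ Y, P.Sol X Y ∧ ∀ s : ℕ, (s : ℕ∞) < k → ¬ TuringRed (B s) (setJoin Z Y)

/-- `P` admits non-relativized avoidance of `k` cones. -/
noncomputable def NRAvoidsCones (P : Problem) (k : ℕ∞) : Prop :=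
  ∀ B : ℕ → Set ℕ, (∀ s : ℕ, (s : ℕ∞) < k → ¬ TuringRed (B s) ∅) →
    ∀ X ∈ P.Inst, TuringRed X ∅ →
      ∃ Y, P.Sol X Y ∧ ∀ s : ℕ, (s : ℕ∞) < k → ¬ TuringRed (B s) Y

/-- `P` admits preservation of `k` non-`Σ⁰₁` definitions. -/
noncomputable def PreservesNonSigmaOne (P : Problem) (k : ℕ∞) : Prop :=
  ∀ Z : Set ℕ, ∀ B : ℕ → Set ℕ, (∀ s : ℕ, (s : ℕ∞) < k → ¬ SigmaOneIn Z (B s)) →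
    ∀ X ∈ P.Inst, TuringRed X Z →
      ∃ Y, P.Sol X Y ∧ ∀ s : ℕ, (s : ℕ∞) < k → ¬ SigmaOneIn (setJoin Z Y) (B s)

/-- `P` admits preservation of `k` hyperimmunities. -/
noncomputable def PreservesHyperimmunities (P : Problem) (k : ℕ∞) : Prop :=
  ∀ Z : Set ℕ, ∀ f : ℕ → (ℕ → ℕ), (∀ s : ℕ, (s : ℕ∞) < k → HyperimmuneIn Z (f s)) →
    ∀ X ∈ P.Inst, TuringRed X Z →
      ∃ Y, P.Sol X Y ∧ ∀ s : ℕ, (s : ℕ∞) < k → HyperimmuneIn (setJoin Z Y) (f s)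

/-- `P` admits preservation of `k` immunities. -/
noncomputable def PreservesImmunities (P : Problem) (k : ℕ∞) : Prop :=
  ∀ Z : Set ℕ, ∀ B : ℕ → Set ℕ, (∀ s : ℕ, (s : ℕ∞) < k → ImmuneIn Z (B s)) →
    ∀ X ∈ P.Inst, TuringRed X Z →
      ∃ Y, P.Sol X Y ∧ ∀ s : ℕ, (s : ℕ∞) < k → ImmuneIn (setJoin Z Y) (B s)

/-- Coding a point of Cantor space as a function `ℕ → ℕ`. -/
def boolFun (X : ℕ → Bool) : ℕ → ℕ := fun n => cond (X n) 1 0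

/-- `F` is a trace of the closed set `C ⊆ 2^ω`: each `F n` is a set of binary strings of
length `n`, one of which is a prefix of a member of `C`. -/
def IsTrace (C : Set (ℕ → Bool)) (F : ℕ → Finset (List Bool)) : Prop :=
  ∀ n, (∀ σ ∈ F n, σ.length = n) ∧ ∃ σ ∈ F n, ∃ X ∈ C, σ = (List.range n).map X

/-- `C ⊆ 2^ω` has a `Z`-computable constant-bound trace. -/
noncomputable def HasCBTraceIn (Z : Set ℕ) (C : Set (ℕ → Bool)) : Prop :=
  ∃ (F : ℕ → Finset (List Bool)) (k : ℕ), IsTrace C F ∧ (∀ n, (F n).card = k) ∧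
    RecursiveInFn (chi Z) (fun n => Encodable.encode (F n) : ℕ → ℕ)

open Classical in
/-- The real `0.B` with binary expansion given by `B`. -/
noncomputable def realOf (B : Set ℕ) : ℝ :=
  ∑' n : ℕ, if n ∈ B then ((2 : ℝ) ^ (n + 1))⁻¹ else 0

/-- A c.e. set of rationals: the image of a c.e. set of naturals under the
canonical enumeration of `ℚ`. -/
noncomputable def CERatSet (W : Set ℚ) : Prop :=
  ∃ S : Set ℕ, CESet S ∧ W = (fun n => Denumerable.ofNat ℚ n) '' S


/-! ### Auxiliary development -/

section Aux

/-- Oracle codes, mirroring the constructors of `RecursiveInFn`. -/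
inductive OCode : Type
  | zero | succ | left | right | oracle
  | pair (a b : OCode)
  | comp (a b : OCode)
  | prec (a b : OCode)
  | rfind (a : OCode)

/-- An injective numbering of oracle codes. -/
def onat : OCode → ℕ
  | .zero => 0
  | .succ => 1
  | .left => 2
  | .right => 3
  | .oracle => 4
  | .pair a b => 4 * Nat.pair (onat a) (onat b) + 5
  | .comp a b => 4 * Nat.pair (onat a) (onat b) + 6
  | .prec a b => 4 * Nat.pair (onat a) (onat b) + 7
  | .rfind a => 4 * (onat a) + 8

theorem onat_injective : ∀ a b : OCode, onat a = onat b → a = b := by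
  intro a
  induction a with
  | zero => intro b h; cases b <;> simp only [onat] at h <;> first | rfl | omega
  | succ => intro b h; cases b <;> simp only [onat] at h <;> first | rfl | omega
  | left => intro b h; cases b <;> simp only [onat] at h <;> first | rfl | omega
  | right => intro b h; cases b <;> simp only [onat] at h <;> first | rfl | omega
  | oracle => intro b h; cases b <;> simp only [onat] at h <;> first | rfl | omega
  | pair a1 a2 ih1 ih2 =>
      intro b h; cases b <;> simp only [onat] at h <;> try omega
      case pair b1 b2 =>
        have he : Nat.pair (onat a1) (onat a2) = Nat.pair (onat b1) (onat b2) := by omega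
        rw [Nat.pair_eq_pair] at he
        rw [ih1 _ he.1, ih2 _ he.2]
  | comp a1 a2 ih1 ih2 =>
      intro b h; cases b <;> simp only [onat] at h <;> try omega
      case comp b1 b2 =>
        have he : Nat.pair (onat a1) (onat a2) = Nat.pair (onat b1) (onat b2) := by omega
        rw [Nat.pair_eq_pair] at he
        rw [ih1 _ he.1, ih2 _ he.2]
  | prec a1 a2 ih1 ih2 =>
      intro b h; cases b <;> simp only [onat] at h <;> try omega
      case prec b1 b2 =>
        have he : Nat.pair (onat a1) (onat a2) = Nat.pair (onat b1) (onat b2) := by omega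
        rw [Nat.pair_eq_pair] at he
        rw [ih1 _ he.1, ih2 _ he.2]
  | rfind a1 ih1 =>
      intro b h; cases b <;> simp only [onat] at h <;> try omega
      case rfind b1 =>
        have he : onat a1 = onat b1 := by omega
        rw [ih1 _ he]

/-- Evaluation of an oracle code relative to an oracle. -/
def evalo (g : ℕ → ℕ) : OCode → ℕ →. ℕ
  | .zero => pure 0
  | .succ => Nat.succ
  | .left => fun n => (Nat.unpair n).1
  | .right => fun n => (Nat.unpair n).2
  | .oracle => g
  | .pair a b => fun n => Nat.pair <$> evalo g a n <*> evalo g b n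
  | .comp a b => fun n => evalo g b n >>= evalo g a
  | .prec a b => Nat.unpaired fun x n =>
      n.rec (evalo g a x) fun y IH => do {let i ← IH; evalo g b (Nat.pair x (Nat.pair y i))}
  | .rfind a => fun x => Nat.rfind fun n => (fun m => m = 0) <$> evalo g a (Nat.pair x n)

theorem evalo_recursiveIn (g : ℕ → ℕ) : ∀ c : OCode, RecursiveInFn g (evalo g c) := by
  intro c
  induction c with
  | zero => exact .zero
  | succ => exact .succ
  | left => exact .left
  | right => exact .right
  | oracle => exact .oracle
  | pair a b iha ihb => exact .pair iha ihb
  | comp a b iha ihb => exact .comp iha ihb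
  | prec a b iha ihb => exact .prec iha ihb
  | rfind a iha => exact .rfind iha

theorem exists_code {g : ℕ → ℕ} {f : ℕ →. ℕ} (h : RecursiveInFn g f) :
    ∃ c : OCode, evalo g c = f := by
  induction h with
  | zero => exact ⟨.zero, rfl⟩
  | succ => exact ⟨.succ, rfl⟩
  | left => exact ⟨.left, rfl⟩
  | right => exact ⟨.right, rfl⟩
  | oracle => exact ⟨.oracle, rfl⟩
  | @pair f h _ _ ih1 ih2 =>
      obtain ⟨c1, e1⟩ := ih1; obtain ⟨c2, e2⟩ := ih2
      exact ⟨.pair c1 c2, by subst e1 e2; rfl⟩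
  | @comp f h _ _ ih1 ih2 =>
      obtain ⟨c1, e1⟩ := ih1; obtain ⟨c2, e2⟩ := ih2
      exact ⟨.comp c1 c2, by subst e1 e2; rfl⟩
  | @prec f h _ _ ih1 ih2 =>
      obtain ⟨c1, e1⟩ := ih1; obtain ⟨c2, e2⟩ := ih2
      exact ⟨.prec c1 c2, by subst e1 e2; rfl⟩
  | @rfind f _ ih =>
      obtain ⟨c1, e1⟩ := ih
      exact ⟨.rfind c1, by subst e1; rfl⟩

theorem recursiveIn_of_partrec {g : ℕ → ℕ} {f : ℕ →. ℕ} (h : Nat.Partrec f) :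
    RecursiveInFn g f := by
  induction h with
  | zero => exact .zero
  | succ => exact .succ
  | left => exact .left
  | right => exact .right
  | pair _ _ ih1 ih2 => exact .pair ih1 ih2
  | comp _ _ ih1 ih2 => exact .comp ih1 ih2
  | prec _ _ ih1 ih2 => exact .prec ih1 ih2
  | rfind _ ih => exact .rfind ih

theorem recursiveIn_of_primrec {g f : ℕ → ℕ} (hf : Primrec f) : RecursiveInFn g ↑f :=
  recursiveIn_of_partrec (Nat.Partrec.of_primrec (Primrec.nat_iff.mp hf))

theorem recIn_trans {g h : ℕ → ℕ} (hg : RecursiveInFn h ↑g) {f : ℕ →. ℕ}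
    (hf : RecursiveInFn g f) : RecursiveInFn h f := by
  induction hf with
  | zero => exact .zero
  | succ => exact .succ
  | left => exact .left
  | right => exact .right
  | oracle => exact hg
  | pair _ _ ih1 ih2 => exact .pair ih1 ih2
  | comp _ _ ih1 ih2 => exact .comp ih1 ih2
  | prec _ _ ih1 ih2 => exact .prec ih1 ih2
  | rfind _ ih => exact .rfind ih

theorem TuringRed.rfl {A : Set ℕ} : TuringRed A A := RecursiveInFn.oracle

theorem TuringRed.trans {A B C : Set ℕ} (h1 : TuringRed A B) (h2 : TuringRed B C) :
    TuringRed A C := recIn_trans h2 h1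

theorem recIn_totalComp {g f u : ℕ → ℕ} (hf : RecursiveInFn g ↑f) (hu : Primrec u) :
    RecursiveInFn g ↑(fun n => f (u n)) := by
  have h := RecursiveInFn.comp hf (recursiveIn_of_primrec (g := g) hu)
  have e : (fun n => (↑u : ℕ →. ℕ) n >>= (↑f : ℕ →. ℕ)) = (↑(fun n => f (u n)) : ℕ →. ℕ) := by
    funext n; simp [PFun.coe_val]; exact Part.bind_some _ _
  rwa [e] at h

theorem recIn_compTotal {g f u : ℕ → ℕ} (hu : Primrec u) (hf : RecursiveInFn g ↑f) :
    RecursiveInFn g ↑(fun n => u (f n)) := by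
  have h := RecursiveInFn.comp (recursiveIn_of_primrec (g := g) hu) hf
  have e : (fun n => (↑f : ℕ →. ℕ) n >>= (↑u : ℕ →. ℕ)) = (↑(fun n => u (f n)) : ℕ →. ℕ) := by
    funext n; simp [PFun.coe_val]; exact Part.bind_some _ _
  rwa [e] at h

theorem recIn_pairTotal {g f u : ℕ → ℕ} (hf : RecursiveInFn g ↑f) (hu : RecursiveInFn g ↑u) :
    RecursiveInFn g ↑(fun n => Nat.pair (f n) (u n)) := by
  have h := RecursiveInFn.pair hf hu
  have e : (fun n => Nat.pair <$> (↑f : ℕ →. ℕ) n <*> (↑u : ℕ →. ℕ) n)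
      = (↑(fun n => Nat.pair (f n) (u n)) : ℕ →. ℕ) := by
    funext n; simp [PFun.coe_val, Seq.seq]
  rwa [e] at h

theorem mem_setJoin_even {A B : Set ℕ} {n : ℕ} : 2 * n ∈ setJoin A B ↔ n ∈ A := by
  constructor
  · rintro (⟨m, hm, e⟩ | ⟨m, hm, e⟩)
    · obtain rfl : n = m := by omega
      exact hm
    · omega
  · intro h; exact Or.inl ⟨n, h, rfl⟩

theorem mem_setJoin_odd {A B : Set ℕ} {n : ℕ} : 2 * n + 1 ∈ setJoin A B ↔ n ∈ B := by
  constructor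
  · rintro (⟨m, hm, e⟩ | ⟨m, hm, e⟩)
    · omega
    · obtain rfl : n = m := by omega
      exact hm
  · intro h; exact Or.inr ⟨n, h, rfl⟩

theorem chi_joinEven {A B : Set ℕ} (n : ℕ) : chi A n = chi (setJoin A B) (2 * n) := by
  by_cases h : n ∈ A <;> simp [chi, mem_setJoin_even, h]

theorem chi_joinOdd {A B : Set ℕ} (n : ℕ) : chi B n = chi (setJoin A B) (2 * n + 1) := by
  by_cases h : n ∈ B <;> simp [chi, mem_setJoin_odd, h]

theorem joinLeft {A B : Set ℕ} : TuringRed A (setJoin A B) := by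
  show RecursiveInFn (chi (setJoin A B)) ↑(chi A)
  have e : chi A = fun n => chi (setJoin A B) (2 * n) := funext fun n => chi_joinEven n
  rw [e]
  exact recIn_totalComp .oracle (Primrec.nat_mul.comp (Primrec.const 2) Primrec.id)

theorem joinRight {A B : Set ℕ} : TuringRed B (setJoin A B) := by
  show RecursiveInFn (chi (setJoin A B)) ↑(chi B)
  have e : chi B = fun n => chi (setJoin A B) (2 * n + 1) := funext fun n => chi_joinOdd n
  rw [e]
  exact recIn_totalComp .oracle (Primrec.succ.comp (Primrec.nat_mul.comp (Primrec.const 2) Primrec.id))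

theorem join_le {A B C : Set ℕ} (hA : TuringRed A C) (hB : TuringRed B C) :
    TuringRed (setJoin A B) C := by
  classical
  show RecursiveInFn (chi C) ↑(chi (setJoin A B))
  set post : ℕ → ℕ := fun p =>
    if (Nat.unpair p).2 % 2 = 0 then (Nat.unpair (Nat.unpair p).1).1
    else (Nat.unpair (Nat.unpair p).1).2 with hpost
  have hpostp : Primrec post := by
    apply Primrec.ite
    · exact PrimrecRel.comp Primrec.eq
        (Primrec.nat_mod.comp (Primrec.snd.comp Primrec.unpair) (Primrec.const 2))
        (Primrec.const 0)
    · exact Primrec.fst.comp (Primrec.unpair.comp (Primrec.fst.comp Primrec.unpair))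
    · exact Primrec.snd.comp (Primrec.unpair.comp (Primrec.fst.comp Primrec.unpair))
  have hdiv : Primrec (fun k : ℕ => k / 2) := Primrec.nat_div.comp Primrec.id (Primrec.const 2)
  have h1 : RecursiveInFn (chi C) ↑(fun k => chi A (k / 2)) := recIn_totalComp hA hdiv
  have h2 : RecursiveInFn (chi C) ↑(fun k => chi B (k / 2)) := recIn_totalComp hB hdiv
  have h3 := recIn_pairTotal (recIn_pairTotal h1 h2) (recursiveIn_of_primrec Primrec.id)
  have h4 := recIn_compTotal hpostp h3
  have hp : ∀ a b k : ℕ, post (Nat.pair (Nat.pair a b) k) = if k % 2 = 0 then a else b := by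
    intro a b k
    by_cases hk : k % 2 = 0 <;> simp [hpost, Nat.unpair_pair, hk]
  have e : (fun n => post ((fun n => Nat.pair (Nat.pair (chi A (n / 2)) (chi B (n / 2))) (id n)) n))
      = chi (setJoin A B) := by
    funext k
    obtain ⟨m, rfl | rfl⟩ := Nat.even_or_odd' k
    · simp only [id, hp]
      rw [if_pos (by omega), show 2 * m / 2 = m by omega]
      exact chi_joinEven m
    · simp only [id, hp]
      rw [if_neg (by omega), show (2 * m + 1) / 2 = m by omega]
      exact chi_joinOdd m
  rwa [e] at h4

theorem chi_injective : Function.Injective chi := by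
  intro A B h
  ext n
  have hn := congrFun h n
  by_cases hA : n ∈ A <;> by_cases hB : n ∈ B <;> simp [chi, hA, hB] at hn ⊢

theorem chi_coe_injective {A B : Set ℕ} (h : (↑(chi A) : ℕ →. ℕ) = ↑(chi B)) : A = B := by
  apply chi_injective
  funext n
  have := congrFun h n
  simpa [PFun.coe_val] using this

end Aux


section Constr

open Classical in
/-- One step of the construction: given the `n`-th and `s`-th elements of the chain and a
code `c`, extend the chain by a solution to the instance coded by `c` relative to the `n`-th
element, if a suitable one exists. -/
noncomputable def pickY (W : Set (Set ℕ)) (P : Problem) (Zn Zs : Set ℕ) (c : ℕ) : Set ℕ :=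
  if hc : ∃ Y X, X ∈ P.Inst ∧ P.Sol X Y ∧ setJoin Zs Y ∈ W ∧
      ∃ cd : OCode, onat cd = c ∧ evalo (chi Zn) cd = ↑(chi X)
  then setJoin Zs hc.choose
  else setJoin Zs Zs

/-- The full history of the construction. -/
noncomputable def histChain (W : Set (Set ℕ)) (P : Problem) (Z0 : Set ℕ) : ℕ → ℕ → Set ℕ
  | 0 => fun _ => Z0
  | s+1 => fun k =>
      if k ≤ s then histChain W P Z0 s k
      else pickY W P (histChain W P Z0 s (Nat.unpair s).1) (histChain W P Z0 s s)
        (Nat.unpair s).2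

/-- The increasing chain of oracles. -/
noncomputable def chain (W : Set (Set ℕ)) (P : Problem) (Z0 : Set ℕ) (n : ℕ) : Set ℕ :=
  histChain W P Z0 n n

theorem hist_eq (W : Set (Set ℕ)) (P : Problem) (Z0 : Set ℕ) :
    ∀ s k, k ≤ s → histChain W P Z0 s k = chain W P Z0 k := by
  intro s
  induction s with
  | zero => intro k hk; obtain rfl := Nat.le_zero.mp hk; rfl
  | succ s ih =>
      intro k hk
      by_cases h : k ≤ s
      · show (if k ≤ s then histChain W P Z0 s k else _) = _
        rw [if_pos h]; exact ih k h
      · obtain rfl : k = s + 1 := by omega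
        rfl

theorem chain_succ (W : Set (Set ℕ)) (P : Problem) (Z0 : Set ℕ) (s : ℕ) :
    chain W P Z0 (s+1) =
      pickY W P (chain W P Z0 (Nat.unpair s).1) (chain W P Z0 s) (Nat.unpair s).2 := by
  show (if s + 1 ≤ s then histChain W P Z0 s (s+1) else
      pickY W P (histChain W P Z0 s (Nat.unpair s).1) (histChain W P Z0 s s)
        (Nat.unpair s).2) = _
  rw [if_neg (by omega), hist_eq W P Z0 s _ (Nat.unpair_left_le s), hist_eq W P Z0 s s le_rfl]

theorem chain_mem_W {W : Set (Set ℕ)} (P : Problem) {Z0 : Set ℕ} (hW : DownwardClosed W)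
    (hZ0 : Z0 ∈ W) : ∀ n, chain W P Z0 n ∈ W := by
  intro n
  induction n with
  | zero => exact hZ0
  | succ s ih =>
      rw [chain_succ]
      unfold pickY
      split_ifs with hc
      · obtain ⟨X, _, _, hmem, _⟩ := hc.choose_spec
        exact hmem
      · exact hW _ ih _ (join_le TuringRed.rfl TuringRed.rfl)

theorem chain_le_succ (W : Set (Set ℕ)) (P : Problem) (Z0 : Set ℕ) (s : ℕ) :
    TuringRed (chain W P Z0 s) (chain W P Z0 (s+1)) := by
  rw [chain_succ]
  unfold pickY
  split_ifs <;> exact joinLeft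

theorem chain_mono (W : Set (Set ℕ)) (P : Problem) (Z0 : Set ℕ) {n m : ℕ} (h : n ≤ m) :
    TuringRed (chain W P Z0 n) (chain W P Z0 m) := by
  induction m with
  | zero => obtain rfl := Nat.le_zero.mp h; exact TuringRed.rfl
  | succ m ih =>
      by_cases h' : n ≤ m
      · exact (ih h').trans (chain_le_succ W P Z0 m)
      · obtain rfl : n = m + 1 := by omega
        exact TuringRed.rfl

end Constr


/-- If a problem `P` admits preservation of a Turing-downward-closed class `W`
but `Q` does not, then there is a Turing ideal `S ⊆ W` in which `P` holds but `Q` does not. -/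
theorem stmt0 (W : Set (Set ℕ)) (hW : DownwardClosed W) (P Q : Problem)
    (hP : Preserves P W) (hQ : ¬ Preserves Q W) :
    ∃ S : Set (Set ℕ), S ⊆ W ∧ TuringIdeal S ∧ HoldsIn P S ∧ ¬ HoldsIn Q S := by
  rw [Preserves] at hQ
  push_neg at hQ
  obtain ⟨Z0, hZ0W, X0, hX0I, hX0Z, hbad⟩ := hQ
  set C := chain W P Z0 with hC
  have hmem : ∀ n, C n ∈ W := chain_mem_W P hW hZ0W
  refine ⟨{Y | ∃ n, TuringRed Y (C n)}, ?_, ⟨?_, ?_⟩, ?_, ?_⟩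
  · rintro Y ⟨n, hY⟩
    exact hW _ (hmem n) _ hY
  · -- closure under join
    rintro A ⟨n, hA⟩ B ⟨m, hB⟩
    exact ⟨max n m, join_le (hA.trans (chain_mono W P Z0 (le_max_left n m)))
      (hB.trans (chain_mono W P Z0 (le_max_right n m)))⟩
  · -- downward closure
    rintro X ⟨n, hX⟩ Y hYX
    exact ⟨n, hYX.trans hX⟩
  · -- P holds
    rintro X hXI ⟨n, hXn⟩
    obtain ⟨cd, hcd⟩ := exists_code hXn
    set s := Nat.pair n (onat cd) with hs
    have hns : n ≤ s := Nat.left_le_pair _ _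
    have hXs : TuringRed X (C s) := hXn.trans (chain_mono W P Z0 hns)
    obtain ⟨Y, hsol, hjoin⟩ := hP (C s) (hmem s) X hXI hXs
    have hcond : ∃ Y X', X' ∈ P.Inst ∧ P.Sol X' Y ∧ setJoin (C s) Y ∈ W ∧
        ∃ cd' : OCode, onat cd' = onat cd ∧ evalo (chi (C n)) cd' = ↑(chi X') :=
      ⟨Y, X, hXI, hsol, hjoin, cd, rfl, hcd⟩
    have hcs : C (s+1) = pickY W P (C n) (C s) (onat cd) := by
      rw [hC, chain_succ W P Z0 s, hs, Nat.unpair_pair]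
    rw [pickY, dif_pos hcond] at hcs
    obtain ⟨X', hX'I, hsol', hjoin', cd', hcd', heval⟩ := hcond.choose_spec
    obtain rfl : cd' = cd := onat_injective _ _ hcd'
    obtain rfl : X' = X := chi_coe_injective (heval.symm.trans hcd)
    exact ⟨hcond.choose, hsol', ⟨s + 1, by rw [hcs]; exact joinRight⟩⟩
  · -- Q fails
    intro hH
    obtain ⟨Y, hsol, hYS⟩ := hH X0 hX0I ⟨0, hX0Z⟩
    obtain ⟨m, hYm⟩ := hYS
    have hZ0C : TuringRed Z0 (C m) := chain_mono W P Z0 (Nat.zero_le m)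
    exact hbad Y hsol (hW _ (hmem m) _ (join_le hZ0C hYm))
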